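/- The total number of paths from (0,0) to all points (i, n−i) for i = 0,…,n in the lattice L*_CS equals the coefficient of x^n in F*(x²)·(1/(1 − x·S(x²)) + 1/(1 − x·C(x²)) − 1), where F*, S, C are the generating functions for diagonal-path counts in L*_CS, large Schröder numbers, and Catalan numbers respectively. -/

import Mathlib

open Finset PowerSeries

/-- Large Schröder numbers. -/
def schroeder : ℕ → ℕ
  | 0 => 1
  | n + 1 => schroeder n + ∑ i : Fin (n + 1), schroeder i * schroeder (n - i)

/-- The points visited by a path (a list of steps) starting at (0,0). -/
def pts (l : List (ℤ × ℤ)) : List (ℤ × ℤ) :=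
  l.scanl (fun p s => (p.1 + s.1, p.2 + s.2)) (0, 0)

/-- The endpoint of a path starting at (0,0). -/
def endPt (l : List (ℤ × ℤ)) : ℤ × ℤ :=
  ((l.map Prod.fst).sum, (l.map Prod.snd).sum)

/-- All steps are unit steps (1,0) or (0,1). -/
def unitSteps (l : List (ℤ × ℤ)) : Prop := ∀ s ∈ l, s = (1, 0) ∨ s = (0, 1)

/-- All steps are (1,0), (0,1) or (1,1). -/
def schSteps (l : List (ℤ × ℤ)) : Prop := ∀ s ∈ l, s = (1, 0) ∨ s = (0, 1) ∨ s = (1, 1)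

/-- The path stays weakly below the diagonal y = x. -/
def weaklyBelow (l : List (ℤ × ℤ)) : Prop := ∀ p ∈ pts l, p.2 ≤ p.1

/-- The path stays strictly below the diagonal except at its start (0,0). -/
def strictBelowAfterStart (l : List (ℤ × ℤ)) : Prop :=
  ∀ p ∈ pts l, p ≠ (0, 0) → p.2 < p.1

/-- Validity of a path starting at point `p` in a lattice where steps (1,0) and (0,1)
are allowed everywhere and the diagonal step (1,1) is allowed exactly from points
satisfying `D`. -/
def okFrom (D : ℤ × ℤ → Prop) : ℤ × ℤ → List (ℤ × ℤ) → Prop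
  | _, [] => True
  | p, s :: l => (s = (1, 0) ∨ s = (0, 1) ∨ (s = (1, 1) ∧ D p)) ∧
      okFrom D (p.1 + s.1, p.2 + s.2) l

/-- Paths from (0,0) to (n,k) in the Catalan–Schröder lattice L_CS:
diagonal steps allowed from points (a,b) with b ≥ a. -/
def LCS (n k : ℕ) : Set (List (ℤ × ℤ)) :=
  {l | okFrom (fun p => p.1 ≤ p.2) (0, 0) l ∧ endPt l = ((n : ℤ), (k : ℤ))}

/-- Paths from (0,0) to (n,k) in the lattice L*_CS:
diagonal steps allowed only from points (a,b) with b > a. -/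
def LCSstar (n k : ℕ) : Set (List (ℤ × ℤ)) :=
  {l | okFrom (fun p => p.1 < p.2) (0, 0) l ∧ endPt l = ((n : ℤ), (k : ℤ))}

/-- Weakly subdiagonal unit-step paths from (0,0) to (n,k). -/
def CPath (n k : ℕ) : Set (List (ℤ × ℤ)) :=
  {l | unitSteps l ∧ endPt l = ((n : ℤ), (k : ℤ)) ∧ weaklyBelow l}

/-- Weakly subdiagonal paths from (0,0) to (n,k) with steps (1,0),(0,1),(1,1). -/
def SPath (n k : ℕ) : Set (List (ℤ × ℤ)) :=
  {l | schSteps l ∧ endPt l = ((n : ℤ), (k : ℤ)) ∧ weaklyBelow l}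

/-- Number of paths from (0,0) to (n,n) in L_CS. -/
noncomputable def fCS (n : ℕ) : ℕ := Nat.card ↥(LCS n n)

/-- Number of paths from (0,0) to (n,n) in L*_CS. -/
noncomputable def fCSstar (n : ℕ) : ℕ := Nat.card ↥(LCSstar n n)

/-- Generating function of the Catalan numbers. -/
noncomputable def catalanGF : PowerSeries ℤ := PowerSeries.mk fun n => (catalan n : ℤ)

/-- Generating function of the large Schröder numbers. -/
noncomputable def schroederGF : PowerSeries ℤ := PowerSeries.mk fun n => (schroeder n : ℤ)

/-- Generating function F(x) of diagonal path counts in L_CS. -/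
noncomputable def FGF : PowerSeries ℤ := PowerSeries.mk fun n => (fCS n : ℤ)

/-- Generating function F*(x) of diagonal path counts in L*_CS. -/
noncomputable def FstarGF : PowerSeries ℤ := PowerSeries.mk fun n => (fCSstar n : ℤ)

/-- Substitution x ↦ x² in a formal power series: g(x²). -/
noncomputable def subSq (g : PowerSeries ℤ) : PowerSeries ℤ :=
  PowerSeries.mk fun n => if 2 ∣ n then PowerSeries.coeff (n / 2) g else 0

/-- Substitution x ↦ x³ in a formal power series: g(x³). -/
noncomputable def subCube (g : PowerSeries ℤ) : PowerSeries ℤ :=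
  PowerSeries.mk fun n => if 3 ∣ n then PowerSeries.coeff (n / 3) g else 0



lemma endPt_nil : endPt [] = (0,0) := rfl

lemma endPt_cons (a : ℤ × ℤ) (t : List (ℤ × ℤ)) :
    endPt (a :: t) = (a.1 + (endPt t).1, a.2 + (endPt t).2) := by simp [endPt]

lemma okFrom_cons (D : ℤ × ℤ → Prop) (p s : ℤ × ℤ) (l : List (ℤ × ℤ)) :
    okFrom D p (s :: l) ↔ (s = (1, 0) ∨ s = (0, 1) ∨ (s = (1, 1) ∧ D p)) ∧
      okFrom D (p.1 + s.1, p.2 + s.2) l := Iff.rfl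

lemma endPt_concat (l : List (ℤ × ℤ)) (s : ℤ × ℤ) :
    endPt (l ++ [s]) = ((endPt l).1 + s.1, (endPt l).2 + s.2) := by
  simp [endPt]

lemma okFrom_concat (D : ℤ × ℤ → Prop) (p : ℤ × ℤ) (l : List (ℤ × ℤ)) (s : ℤ × ℤ) :
    okFrom D p (l ++ [s]) ↔ okFrom D p l ∧
      (s = (1, 0) ∨ s = (0, 1) ∨ (s = (1, 1) ∧ D (p.1 + (endPt l).1, p.2 + (endPt l).2))) := by
  induction l generalizing p with
  | nil => rw [List.nil_append, okFrom_cons]; simp [okFrom, endPt_nil, and_comm]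
  | cons a t ih =>
    rw [List.cons_append, okFrom_cons, okFrom_cons, ih, endPt_cons, and_assoc]
    have : ((p.1 + a.1) + (endPt t).1, (p.2 + a.2) + (endPt t).2)
        = (p.1 + (a.1 + (endPt t).1), p.2 + (a.2 + (endPt t).2)) := by
      simp [add_assoc]
    rw [this]

lemma okFrom_steps (D : ℤ × ℤ → Prop) (p : ℤ × ℤ) (l : List (ℤ × ℤ)) (h : okFrom D p l) :
    ∀ s ∈ l, s = (1,0) ∨ s = (0,1) ∨ s = (1,1) := by
  induction l generalizing p with
  | nil => simp
  | cons a t ih =>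
    rw [okFrom_cons] at h
    intro s hs
    rcases List.mem_cons.1 hs with rfl | hs
    · rcases h.1 with h' | h' | h'
      · exact Or.inl h'
      · exact Or.inr (Or.inl h')
      · exact Or.inr (Or.inr h'.1)
    · exact ih _ h.2 s hs

lemma endPt_nonneg (l : List (ℤ × ℤ)) (h : ∀ s ∈ l, s = (1,0) ∨ s = (0,1) ∨ s = (1,1)) :
    0 ≤ (endPt l).1 ∧ 0 ≤ (endPt l).2 := by
  constructor <;>
  · apply List.sum_nonneg
    intro x hx
    obtain ⟨s, hs, rfl⟩ := List.mem_map.1 hx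
    rcases h s hs with rfl | rfl | rfl <;> norm_num

lemma endPt_sum_eq (l : List (ℤ × ℤ)) :
    (endPt l).1 + (endPt l).2 = (l.map (fun s => s.1 + s.2)).sum := by
  induction l with
  | nil => simp [endPt]
  | cons a t ih => rw [endPt_cons, List.map_cons, List.sum_cons, ← ih]; ring

lemma length_le_endPt (l : List (ℤ × ℤ)) (h : ∀ s ∈ l, s = (1,0) ∨ s = (0,1) ∨ s = (1,1)) :
    (l.length : ℤ) ≤ (endPt l).1 + (endPt l).2 := by
  rw [endPt_sum_eq]
  calc (l.length : ℤ) = (l.map (fun _ => (1:ℤ))).sum := by simp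
  _ ≤ _ := by
      apply List.sum_le_sum
      intro s hs
      rcases h s hs with rfl | rfl | rfl <;> norm_num

noncomputable section

def PathsTo (z : ℤ × ℤ) : Set (List (ℤ × ℤ)) :=
  {l | okFrom (fun p => p.1 < p.2) (0, 0) l ∧ endPt l = z}

lemma finite_boundedLists (T : Set (ℤ × ℤ)) (hT : T.Finite) :
    ∀ N : ℕ, {l : List (ℤ × ℤ) | l.length ≤ N ∧ ∀ s ∈ l, s ∈ T}.Finite := by
  intro N
  induction N with
  | zero =>
    apply Set.Finite.subset (Set.finite_singleton ([] : List (ℤ × ℤ)))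
    rintro l ⟨hl, -⟩
    simp [List.length_eq_zero_iff.1 (Nat.le_zero.1 hl)]
  | succ N ih =>
    apply Set.Finite.subset (Set.Finite.insert [] (Set.Finite.image2 List.cons hT ih))
    rintro l ⟨hl, hT'⟩
    cases l with
    | nil => exact Set.mem_insert _ _
    | cons a t =>
      right
      exact Set.mem_image2_of_mem (hT' a List.mem_cons_self)
        ⟨Nat.succ_le_succ_iff.1 hl, fun s hs => hT' s (List.mem_cons_of_mem a hs)⟩

lemma pathsTo_finite (z : ℤ × ℤ) : (PathsTo z).Finite := by
  apply Set.Finite.subset (finite_boundedLists {(1,0),(0,1),(1,1)}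
    (Set.toFinite _) (z.1 + z.2).toNat)
  rintro l ⟨h1, h2⟩
  have hs := okFrom_steps _ _ _ h1
  have hlen := length_le_endPt l hs
  rw [h2] at hlen
  have h0 : (0:ℤ) ≤ z.1 + z.2 := le_trans (by positivity) hlen
  constructor
  · exact_mod_cast Int.le_toNat h0 |>.2 hlen
  · intro s hsl
    rcases hs s hsl with rfl | rfl | rfl <;> simp

lemma pathsTo_neg (z : ℤ × ℤ) (h : z.1 < 0 ∨ z.2 < 0) : PathsTo z = ∅ := by
  ext l
  simp only [PathsTo, Set.mem_setOf_eq, Set.mem_empty_iff_false, iff_false]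
  rintro ⟨h1, h2⟩
  have := endPt_nonneg l (okFrom_steps _ _ _ h1)
  rw [h2] at this
  rcases h with h | h <;> omega

lemma pathsTo_zero : PathsTo (0, 0) = {[]} := by
  ext l
  simp only [PathsTo, Set.mem_setOf_eq, Set.mem_singleton_iff]
  constructor
  · rintro ⟨h1, h2⟩
    have hlen := length_le_endPt l (okFrom_steps _ _ _ h1)
    rw [h2] at hlen
    have h0 : (l.length : ℤ) ≤ 0 := by simpa using hlen
    have : l.length = 0 := by omega
    exact List.length_eq_zero_iff.1 this
  · rintro rfl
    exact ⟨trivial, rfl⟩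

lemma pathsTo_decomp (z : ℤ × ℤ) (hz : z ≠ (0, 0)) :
    PathsTo z = ((· ++ [((1:ℤ), (0:ℤ))]) '' PathsTo (z.1 - 1, z.2)) ∪
      ((· ++ [((0:ℤ), (1:ℤ))]) '' PathsTo (z.1, z.2 - 1)) ∪
      (if z.1 < z.2 then ((· ++ [((1:ℤ), (1:ℤ))]) '' PathsTo (z.1 - 1, z.2 - 1)) else ∅) := by
  ext l
  constructor
  · rintro ⟨h1, h2⟩
    have hne : l ≠ [] := by
      rintro rfl
      exact hz (by simpa [endPt] using h2.symm)
    obtain ⟨t, s, rfl⟩ : ∃ t s, l = t ++ [s] :=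
      ⟨l.dropLast, l.getLast hne, (List.dropLast_append_getLast hne).symm⟩
    rw [okFrom_concat] at h1
    rw [endPt_concat] at h2
    obtain ⟨hok, hstep⟩ := h1
    simp only [zero_add] at hstep
    rcases hstep with rfl | rfl | ⟨rfl, hD⟩
    · left; left
      refine ⟨t, ⟨hok, ?_⟩, rfl⟩
      have := Prod.ext_iff.1 h2
      simp at this
      exact Prod.ext (by omega) (by omega)
    · left; right
      refine ⟨t, ⟨hok, ?_⟩, rfl⟩
      have := Prod.ext_iff.1 h2
      simp at this
      exact Prod.ext (by omega) (by omega)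
    · right
      have he : endPt t = (z.1 - 1, z.2 - 1) := by
        have := Prod.ext_iff.1 h2
        simp at this
        exact Prod.ext (by omega) (by omega)
      rw [he] at hD
      simp only at hD
      rw [if_pos (by omega : z.1 < z.2)]
      exact ⟨t, ⟨hok, he⟩, rfl⟩
  · intro hl
    rcases hl with (⟨l', ⟨hok, he⟩, rfl⟩ | ⟨l', ⟨hok, he⟩, rfl⟩) | hl
    · refine ⟨(okFrom_concat _ _ _ _).2 ⟨hok, Or.inl rfl⟩, ?_⟩
      rw [endPt_concat, he]
      exact Prod.ext (by simp) (by simp)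
    · refine ⟨(okFrom_concat _ _ _ _).2 ⟨hok, Or.inr (Or.inl rfl)⟩, ?_⟩
      rw [endPt_concat, he]
      exact Prod.ext (by simp) (by simp)
    · by_cases hcond : z.1 < z.2
      · rw [if_pos hcond] at hl
        obtain ⟨l', ⟨hok, he⟩, rfl⟩ := hl
        refine ⟨(okFrom_concat _ _ _ _).2 ⟨hok, Or.inr (Or.inr ⟨rfl, ?_⟩)⟩, ?_⟩
        · rw [he]; simpa using by omega
        · rw [endPt_concat, he]
          exact Prod.ext (by simp) (by simp)
      · rw [if_neg hcond] at hl
        exact absurd hl (Set.notMem_empty _)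

def gz (z : ℤ × ℤ) : ℤ := ((PathsTo z).ncard : ℤ)

lemma concat_injective (s : ℤ × ℤ) : Function.Injective (· ++ [s] : List (ℤ×ℤ) → List (ℤ×ℤ)) :=
  fun _ _ h => List.append_cancel_right h

lemma concat_ne (s t : ℤ × ℤ) (hst : s ≠ t) (l₁ l₂ : List (ℤ × ℤ)) :
    l₁ ++ [s] ≠ l₂ ++ [t] := by
  intro h
  have := congrArg List.getLast? h
  simp [List.getLast?_append] at this
  exact hst this

lemma gz_rec (z : ℤ × ℤ) (hz : z ≠ (0, 0)) :
    gz z = gz (z.1 - 1, z.2) + gz (z.1, z.2 - 1) +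
      (if z.1 < z.2 then gz (z.1 - 1, z.2 - 1) else 0) := by
  have d12 : Disjoint ((· ++ [((1:ℤ), (0:ℤ))]) '' PathsTo (z.1 - 1, z.2))
      ((· ++ [((0:ℤ), (1:ℤ))]) '' PathsTo (z.1, z.2 - 1)) := by
    rw [Set.disjoint_left]
    rintro l ⟨l₁, -, rfl⟩ ⟨l₂, -, h⟩
    exact concat_ne _ _ (by decide) l₂ l₁ h
  have fin : ∀ z' s, (((· ++ [s]) : List (ℤ×ℤ) → _) '' PathsTo z').Finite :=
    fun z' s => (pathsTo_finite z').image _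
  have key : ∀ (s : ℤ×ℤ) (z' : ℤ×ℤ), (((· ++ [s]) '' PathsTo z').ncard : ℤ) = gz z' := by
    intro s z'
    rw [Set.ncard_image_of_injective _ (concat_injective s)]; rfl
  rw [gz, pathsTo_decomp z hz]
  by_cases hcond : z.1 < z.2
  · rw [if_pos hcond, if_pos hcond]
    have d3 : Disjoint (((· ++ [((1:ℤ), (0:ℤ))]) '' PathsTo (z.1 - 1, z.2)) ∪
        ((· ++ [((0:ℤ), (1:ℤ))]) '' PathsTo (z.1, z.2 - 1)))
        ((· ++ [((1:ℤ), (1:ℤ))]) '' PathsTo (z.1 - 1, z.2 - 1)) := by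
      rw [Set.disjoint_left]
      rintro l (⟨l₁, -, rfl⟩ | ⟨l₁, -, rfl⟩) ⟨l₂, -, h⟩ <;>
        exact concat_ne _ _ (by decide) l₂ l₁ h
    rw [Set.ncard_union_eq d3 (Set.Finite.union (fin _ _) (fin _ _)) (fin _ _),
      Set.ncard_union_eq d12 (fin _ _) (fin _ _)]
    push_cast
    rw [key, key, key]
  · rw [if_neg hcond, if_neg hcond, Set.union_empty,
      Set.ncard_union_eq d12 (fin _ _) (fin _ _)]
    push_cast
    rw [key, key]
    ring

def gNb (i j : ℕ) : ℤ := gz ((i : ℤ), (j : ℤ))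

lemma gz_empty (z : ℤ × ℤ) (h : z.1 < 0 ∨ z.2 < 0) : gz z = 0 := by
  rw [gz, pathsTo_neg z h, Set.ncard_empty]; rfl

lemma gNb00 : gNb 0 0 = 1 := by
  simp only [gNb, Nat.cast_zero, gz, pathsTo_zero, Set.ncard_singleton, Nat.cast_one]

lemma gNb_row (i : ℕ) : gNb (i+1) 0 = gNb i 0 := by
  have h := gz_rec ((i:ℤ) + 1, (0 : ℤ)) (by simp; omega)
  simp only at h
  have e1 : gNb (i+1) 0 = gz ((i:ℤ)+1, 0) := by simp [gNb]
  have e2 : gNb i 0 = gz ((i:ℤ), 0) := by simp [gNb]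
  rw [e1, e2, h, gz_empty ((i:ℤ)+1, 0-1) (Or.inr (by norm_num)),
    if_neg (by omega : ¬ ((i:ℤ)+1) < 0), show ((i:ℤ)+1)-1 = (i:ℤ) by ring]
  ring

lemma gNb_col (j : ℕ) : gNb 0 (j+1) = gNb 0 j := by
  have h := gz_rec ((0 : ℤ), (j:ℤ) + 1) (by simp; omega)
  simp only at h
  have e1 : gNb 0 (j+1) = gz (0, (j:ℤ)+1) := by simp [gNb]
  have e2 : gNb 0 j = gz (0, (j:ℤ)) := by simp [gNb]
  rw [e1, e2, h, gz_empty ((0:ℤ)-1, (j:ℤ)+1) (Or.inl (by norm_num)),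
    if_pos (by omega : (0:ℤ) < (j:ℤ)+1),
    gz_empty ((0:ℤ)-1, (j:ℤ)+1-1) (Or.inl (by norm_num)),
    show ((j:ℤ)+1)-1 = (j:ℤ) by ring]
  ring

lemma gNb_int (i j : ℕ) : gNb (i+1) (j+1) = gNb i (j+1) + gNb (i+1) j +
    (if i < j then gNb i j else 0) := by
  have h := gz_rec ((i:ℤ) + 1, (j:ℤ) + 1) (by simp; omega)
  simp only at h
  have e0 : gNb (i+1) (j+1) = gz ((i:ℤ)+1, (j:ℤ)+1) := by simp [gNb]
  have e1 : gNb i (j+1) = gz ((i:ℤ), (j:ℤ)+1) := by simp [gNb]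
  have e2 : gNb (i+1) j = gz ((i:ℤ)+1, (j:ℤ)) := by simp [gNb]
  have e3 : gNb i j = gz ((i:ℤ), (j:ℤ)) := by simp [gNb]
  rw [e0, e1, e2, e3, h, show ((i:ℤ)+1)-1 = (i:ℤ) by ring,
    show ((j:ℤ)+1)-1 = (j:ℤ) by ring]
  by_cases hij : i < j
  · rw [if_pos hij, if_pos (by omega : (i:ℤ)+1 < (j:ℤ)+1)]
  · rw [if_neg hij, if_neg (by omega : ¬ ((i:ℤ)+1 < (j:ℤ)+1))]

def w : ℕ → ℕ → ℤ
  | 0, 0 => 1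
  | _+1, 0 => 1
  | 0, _+1 => 0
  | p+1, q+1 => if q + 1 ≤ p + 1 then w p (q+1) + w (p+1) q else 0
termination_by p q => (p, q)

def v : ℕ → ℕ → ℤ
  | 0, _ => 1
  | _+1, 0 => 0
  | p+1, q+1 => if p + 1 ≤ q + 1 then v p (q+1) + v (p+1) q + v p q else 0
termination_by p q => (p, q)

@[simp] lemma w_zero_right (p : ℕ) : w p 0 = 1 := by cases p <;> simp [w]

lemma w_above (p q : ℕ) (h : p < q) : w p q = 0 := by
  match p, q with
  | 0, q+1 => simp [w]
  | p+1, q+1 => rw [w, if_neg (by omega)]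

lemma w_rec (p q : ℕ) (h : q ≤ p) : w (p+1) (q+1) = w p (q+1) + w (p+1) q := by
  rw [w, if_pos (by omega)]

lemma w_diag_eq (k : ℕ) : w (k+1) (k+1) = w (k+1) k := by
  rw [w_rec k k le_rfl, w_above k (k+1) (by omega), zero_add]

@[simp] lemma v_zero_left (q : ℕ) : v 0 q = 1 := by cases q <;> simp [v]

lemma v_above (p q : ℕ) (h : q < p) : v p q = 0 := by
  match p, q with
  | p+1, 0 => simp [v]
  | p+1, q+1 => rw [v, if_neg (by omega)]

lemma v_rec (p q : ℕ) (h : p ≤ q) : v (p+1) (q+1) = v p (q+1) + v (p+1) q + v p q := by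
  rw [v, if_pos (by omega)]

lemma v_diag (k : ℕ) : v (k+1) (k+1) = v k (k+1) + v k k := by
  rw [v_rec k k le_rfl, v_above (k+1) k (by omega)]; ring

lemma vG : ∀ n a q, a + q ≤ n → a < q →
    v a q = ∑ m ∈ range (a+1), v m m * v (a-m) (q-m-1) := by
  intro n
  induction n with
  | zero => intro a q h h2; omega
  | succ n ih =>
    intro a q hle hlt
    match a, q with
    | 0, q+1 => simp
    | a+1, q+1 =>
      have hrec := v_rec a q (by omega)
      by_cases hq : q = a + 1
      · subst hq
        have IH1 : v a (a+1+1) = ∑ m ∈ range (a+1), v m m * v (a-m) (a+1+1-m-1) :=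
          ih a (a+1+1) (by omega) (by omega)
        have IH2 : v a (a+1) = ∑ m ∈ range (a+1), v m m * v (a-m) (a+1-m-1) :=
          ih a (a+1) (by omega) (by omega)
        have key : ∀ m ∈ range (a+1), v m m * v (a+1-m) (a+1+1-m-1) =
            v m m * v (a-m) (a+1+1-m-1) + v m m * v (a-m) (a+1-m-1) := by
          intro m hm
          rw [Finset.mem_range] at hm
          rw [show a+1+1-m-1 = (a-m)+1 by omega, show a+1-m-1 = a-m by omega,
            show a+1-m = (a-m)+1 by omega, v_diag]
          ring
        rw [Finset.sum_range_succ, Finset.sum_congr rfl key, Finset.sum_add_distrib,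
          ← IH1, ← IH2, hrec, show a+1-(a+1) = 0 by omega,
          show a+1+1-(a+1)-1 = 0 by omega]
        simp only [v_zero_left]
        ring
      · have IH1 : v a (q+1) = ∑ m ∈ range (a+1), v m m * v (a-m) (q+1-m-1) :=
          ih a (q+1) (by omega) (by omega)
        have IH2 : v (a+1) q = ∑ m ∈ range (a+1+1), v m m * v (a+1-m) (q-m-1) :=
          ih (a+1) q (by omega) (by omega)
        have IH3 : v a q = ∑ m ∈ range (a+1), v m m * v (a-m) (q-m-1) :=
          ih a q (by omega) (by omega)
        have key : ∀ m ∈ range (a+1), v m m * v (a+1-m) (q+1-m-1) =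
            v m m * v (a-m) (q+1-m-1) + v m m * v (a+1-m) (q-m-1)
              + v m m * v (a-m) (q-m-1) := by
          intro m hm
          rw [Finset.mem_range] at hm
          rw [show a+1-m = (a-m)+1 by omega, show q+1-m-1 = (q-m-1)+1 by omega,
            v_rec (a-m) (q-m-1) (by omega), show q-m-1+1 = q-m by omega,
            show q-m = q+1-m-1 by omega]
          ring
        rw [Finset.sum_range_succ, Finset.sum_congr rfl key, Finset.sum_add_distrib,
          Finset.sum_add_distrib, ← IH1, ← IH3, hrec, IH2, Finset.sum_range_succ,
          show a+1-(a+1) = 0 by omega]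
        simp only [v_zero_left, mul_one]
        ring

lemma wG : ∀ n p b, p + b ≤ n → b < p →
    w p b = ∑ m ∈ range (b+1), w m m * w (p-m-1) (b-m) := by
  intro n
  induction n with
  | zero => intro p b h h2; omega
  | succ n ih =>
    intro p b hle hlt
    match p, b with
    | p+1, 0 => simp
    | p+1, b+1 =>
      -- b+1 < p+1 so b+1 ≤ p, in particular p = p'+1 ≥ 1; recursion:
      have hrec := w_rec p b (by omega)
      have IH1 : w p (b+1) = ∑ m ∈ range (b+1+1), w m m * w (p-m-1) (b+1-m) := by
        by_cases hpb : b+1 < p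
        · exact ih p (b+1) (by omega) hpb
        · -- p = b+1: w p (b+1) = w (b+1) (b+1); RHS?
          have hpe : p = b+1 := by omega
          subst hpe
          -- w (b+1) (b+1) = ∑_{m≤b+1} wd m * w (b-m) (b+1-m); terms with m ≤ b: b+1-m > b-m so 0
          rw [Finset.sum_range_succ, show b+1-(b+1)-1 = 0 by omega,
            show b+1-(b+1) = 0 by omega]
          have z : ∀ m ∈ range (b+1), w m m * w (b+1-m-1) (b+1-m) = 0 := by
            intro m hm
            rw [Finset.mem_range] at hm
            rw [w_above (b+1-m-1) (b+1-m) (by omega), mul_zero]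
          rw [Finset.sum_congr rfl z, Finset.sum_const_zero]
          simp
      have IH2 : w (p+1) b = ∑ m ∈ range (b+1), w m m * w (p+1-m-1) (b-m) := by
        rcases Nat.eq_zero_or_pos b with hb | hb
        · subst hb
          simp
        · have : b-1+1 = b := by omega
          exact this ▸ ih (p+1) b (by omega) (by omega)
      have key : ∀ m ∈ range (b+1), w m m * w (p+1-m-1) (b+1-m) =
          w m m * w (p-m-1) (b+1-m) + w m m * w (p+1-m-1) (b-m) := by
        intro m hm
        rw [Finset.mem_range] at hm
        rw [show p+1-m-1 = (p-m-1)+1 by omega, show b+1-m = (b-m)+1 by omega,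
          w_rec (p-m-1) (b-m) (by omega), show p-m-1+1 = p+1-m-1 by omega]
        ring
      rw [Finset.sum_range_succ, Finset.sum_congr rfl key, Finset.sum_add_distrib,
        ← IH2]
      rw [Finset.sum_range_succ] at IH1
      rw [hrec, IH1, show b+1-(b+1) = 0 by omega]
      simp only [w_zero_right, mul_one]
      ring

lemma vd_schroeder : ∀ k, v k k = (schroeder k : ℤ) := by
  intro k
  induction k using Nat.strong_induction_on with
  | _ k ih =>
    match k with
    | 0 => simp [schroeder]
    | k+1 =>
      rw [v_diag, vG (k + (k+1)) k (k+1) le_rfl (by omega)]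
      have e : ∀ m ∈ range (k+1), v m m * v (k-m) (k+1-m-1) =
          (schroeder m : ℤ) * (schroeder (k-m) : ℤ) := by
        intro m hm
        rw [Finset.mem_range] at hm
        rw [show k+1-m-1 = k-m by omega, ih m (by omega), ih (k-m) (by omega)]
      rw [Finset.sum_congr rfl e, ih k (by omega), schroeder]
      have hs : ∑ i : Fin (k+1), schroeder i * schroeder (k - i)
          = ∑ i ∈ range (k+1), schroeder i * schroeder (k-i) :=
        Fin.sum_univ_eq_sum_range (fun i => schroeder i * schroeder (k - i)) (k+1)
      rw [hs]
      push_cast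
      ring

lemma wd_catalan : ∀ k, w k k = (catalan k : ℤ) := by
  intro k
  induction k using Nat.strong_induction_on with
  | _ k ih =>
    match k with
    | 0 => simp [w]
    | k+1 =>
      rw [w_diag_eq, wG ((k+1) + k) (k+1) k le_rfl (by omega)]
      have e : ∀ m ∈ range (k+1), w m m * w (k+1-m-1) (k-m) =
          (catalan m : ℤ) * (catalan (k-m) : ℤ) := by
        intro m hm
        rw [Finset.mem_range] at hm
        rw [show k+1-m-1 = k-m by omega, ih m (by omega), ih (k-m) (by omega)]
      rw [Finset.sum_congr rfl e, catalan_succ]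
      have hs : ∑ i : Fin (k+1), catalan i * catalan (k - i)
          = ∑ i ∈ range (k+1), catalan i * catalan (k-i) :=
        Fin.sum_univ_eq_sum_range (fun i => catalan i * catalan (k - i)) (k+1)
      rw [hs]
      push_cast
      ring

def bb : ℕ → ℕ → ℤ
  | 0, 0 => 1
  | 0, _+1 => 0
  | p+1, q => w p q

def st : ℕ → ℕ → ℤ
  | 0, 0 => 1
  | _+1, 0 => 0
  | p, q+1 => v p q

@[simp] lemma bb_zero_right : ∀ p, bb p 0 = 1 := by
  intro p; cases p <;> simp [bb]

lemma bb_succ (p q : ℕ) : bb (p+1) q = w p q := by cases q <;> rfl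

lemma bb_diag (p : ℕ) (h : 1 ≤ p) : bb p p = 0 := by
  match p with
  | p+1 => rw [bb_succ, w_above p (p+1) (by omega)]

@[simp] lemma st_zero_left : ∀ q, st 0 q = 1 := by
  intro q; cases q <;> simp [st]

lemma st_succ (p q : ℕ) : st p (q+1) = v p q := by cases p <;> simp [st]

lemma st_diag (p : ℕ) (h : 1 ≤ p) : st p p = 0 := by
  match p with
  | p+1 => rw [st_succ, v_above (p+1) p (by omega)]

def gN (i j : ℕ) : ℤ := gNb i j
lemma gN00 : gN 0 0 = 1 := gNb00
lemma gN_row : ∀ i, gN (i+1) 0 = gN i 0 := gNb_row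
lemma gN_col : ∀ j, gN 0 (j+1) = gN 0 j := gNb_col
lemma gN_int : ∀ i j, gN (i+1) (j+1) = gN i (j+1) + gN (i+1) j +
    (if i < j then gN i j else 0) := gNb_int

lemma gN_row' : ∀ i, gN i 0 = 1 := by
  intro i; induction i with
  | zero => exact gN00
  | succ i ih => rw [gN_row, ih]

lemma gN_col' : ∀ j, gN 0 j = 1 := by
  intro j; induction j with
  | zero => exact gN00
  | succ j ih => rw [gN_col, ih]

lemma below_decomp : ∀ n i j, i + j ≤ n → j ≤ i →
    gN i j = ∑ m ∈ range (j+1), gN m m * bb (i-m) (j-m) := by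
  intro n
  induction n with
  | zero =>
    intro i j h1 h2
    have : i = 0 ∧ j = 0 := by omega
    obtain ⟨rfl, rfl⟩ := this
    simp [gN00]
  | succ n ih =>
    intro i j hle hji
    match j with
    | 0 => simp [gN_row', gN00]
    | j+1 =>
      match i with
      | i+1 =>
        by_cases hd : j+1 = i+1
        · -- diagonal
          rw [← hd]
          rw [Finset.sum_range_succ, show j+1-(j+1) = 0 by omega]
          have z : ∀ m ∈ range (j+1), gN m m * bb (j+1-m) (j+1-m) = 0 := by
            intro m hm
            rw [Finset.mem_range] at hm
            rw [bb_diag (j+1-m) (by omega), mul_zero]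
          rw [Finset.sum_congr rfl z, Finset.sum_const_zero]
          simp [bb]
        · -- j+1 < i+1, i.e. j < i
          have hji' : j + 1 ≤ i := by omega
          have IH1 : gN i (j+1) = ∑ m ∈ range (j+1+1), gN m m * bb (i-m) (j+1-m) :=
            ih i (j+1) (by omega) (by omega)
          have IH2 : gN (i+1) j = ∑ m ∈ range (j+1), gN m m * bb (i+1-m) (j-m) :=
            ih (i+1) j (by omega) (by omega)
          have key : ∀ m ∈ range (j+1), gN m m * bb (i+1-m) (j+1-m) =
              gN m m * bb (i-m) (j+1-m) + gN m m * bb (i+1-m) (j-m) := by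
            intro m hm
            rw [Finset.mem_range] at hm
            obtain ⟨p, hp⟩ : ∃ p, i - m = p + 1 := ⟨i-m-1, by omega⟩
            rw [show i+1-m = (p+1)+1 by omega, show j+1-m = (j-m)+1 by omega, hp]
            simp only [bb_succ]
            rw [w_rec p (j-m) (by omega)]
            ring
          rw [Finset.sum_range_succ] at IH1
          rw [gN_int, if_neg (by omega : ¬ i < j), IH1, IH2,
            Finset.sum_range_succ (fun m => gN m m * bb (i+1-m) (j+1-m)) (j+1),
            Finset.sum_congr rfl key, Finset.sum_add_distrib,
            show j+1-(j+1) = 0 by omega]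
          simp only [bb_zero_right, mul_one, add_zero]
          ring

lemma above_decomp : ∀ n i j, i + j ≤ n → i ≤ j →
    gN i j = ∑ m ∈ range (i+1), gN m m * st (i-m) (j-m) := by
  intro n
  induction n with
  | zero =>
    intro i j h1 h2
    have : i = 0 ∧ j = 0 := by omega
    obtain ⟨rfl, rfl⟩ := this
    simp [gN00]
  | succ n ih =>
    intro i j hle hij
    match i with
    | 0 => simp [gN_col', gN00]
    | i+1 =>
      match j with
      | j+1 =>
        by_cases hd : i+1 = j+1
        · rw [hd]
          rw [Finset.sum_range_succ, show j+1-(j+1) = 0 by omega]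
          have z : ∀ m ∈ range (j+1), gN m m * st (j+1-m) (j+1-m) = 0 := by
            intro m hm
            rw [Finset.mem_range] at hm
            rw [st_diag (j+1-m) (by omega), mul_zero]
          rw [Finset.sum_congr rfl z, Finset.sum_const_zero]
          simp [st]
        · have hij' : i + 1 ≤ j := by omega
          have IH1 : gN i (j+1) = ∑ m ∈ range (i+1), gN m m * st (i-m) (j+1-m) :=
            ih i (j+1) (by omega) (by omega)
          have IH2 : gN (i+1) j = ∑ m ∈ range (i+1+1), gN m m * st (i+1-m) (j-m) :=
            ih (i+1) j (by omega) (by omega)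
          have IH3 : gN i j = ∑ m ∈ range (i+1), gN m m * st (i-m) (j-m) :=
            ih i j (by omega) (by omega)
          have key : ∀ m ∈ range (i+1), gN m m * st (i+1-m) (j+1-m) =
              gN m m * st (i-m) (j+1-m) + gN m m * st (i+1-m) (j-m)
                + gN m m * st (i-m) (j-m) := by
            intro m hm
            rw [Finset.mem_range] at hm
            obtain ⟨r, hr⟩ : ∃ r, j - m = r + 1 := ⟨j-m-1, by omega⟩
            rw [show j+1-m = (r+1)+1 by omega, show i+1-m = (i-m)+1 by omega, hr]
            simp only [st_succ]
            rw [v_rec (i-m) r (by omega)]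
            ring
          rw [Finset.sum_range_succ] at IH2
          rw [gN_int, if_pos (by omega : i < j), IH1, IH2, IH3,
            Finset.sum_range_succ (fun m => gN m m * st (i+1-m) (j+1-m)) (i+1),
            Finset.sum_congr rfl key, Finset.sum_add_distrib, Finset.sum_add_distrib,
            show i+1-(i+1) = 0 by omega]
          simp only [st_zero_left, mul_one]
          ring

-- summation helpers
lemma sum_cut (N j : ℕ) (h : j < N) (f : ℕ → ℤ) :
    ∑ x ∈ range N, (if x ≤ j then f x else 0) = ∑ x ∈ range (j+1), f x := by
  rw [← Finset.sum_subset (Finset.range_subset_range.2 (by omega) : range (j+1) ⊆ range N)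
    (fun x hx hnx => if_neg (by simp only [Finset.mem_range] at hnx; omega))]
  apply Finset.sum_congr rfl
  intro x hx
  rw [Finset.mem_range] at hx
  exact if_pos (by omega)

lemma sum_shift (N a : ℕ) (h : a ≤ N) (f : ℕ → ℤ) (hf : ∀ x, x < a → f x = 0) :
    ∑ x ∈ range N, f x = ∑ x ∈ range (N - a), f (a + x) := by
  rw [← Finset.sum_Ico_eq_sum_range, Finset.range_eq_Ico]
  apply (Finset.sum_subset (Finset.Ico_subset_Ico (by omega) le_rfl) ?_).symm
  intro x hx hnx
  rw [Finset.mem_Ico] at hx hnx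
  exact hf x (by omega)

lemma sum_diag_ite (k : ℕ) (f : ℕ → ℤ) :
    ∑ p ∈ range (k+1), (if 2*p = k then f p else 0) = if 2 ∣ k then f (k/2) else 0 := by
  by_cases h : 2 ∣ k
  · rw [if_pos h, Finset.sum_eq_single_of_mem (k/2) (Finset.mem_range.2 (by omega))]
    · rw [if_pos (by omega)]
    · intro b hb hne
      exact if_neg (by omega)
  · rw [if_neg h]
    apply Finset.sum_eq_zero
    intro p hp
    exact if_neg (by omega)

def What (k : ℕ) : ℤ := ∑ p ∈ range (k+1), w p (k-p)
def Vhat (k : ℕ) : ℤ := ∑ p ∈ range (k+1), v p (k-p)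

lemma what_rec (k : ℕ) : What k =
    (∑ m ∈ range (k+1), (if 2*m+1 ≤ k then w m m * What (k-1-2*m) else 0))
      + (if 2 ∣ k then w (k/2) (k/2) else 0) := by
  have split : ∀ p ∈ range (k+1), w p (k-p) =
      (if 2*p = k then w p (k-p) else 0) + (if k < 2*p then w p (k-p) else 0) := by
    intro p hp
    rcases lt_trichotomy (2*p) k with h | h | h
    · rw [if_neg (by omega), if_neg (by omega), w_above p (k-p) (by omega)]
      ring
    · rw [if_pos (by omega), if_neg (by omega)]
      ring
    · rw [if_neg (by omega), if_pos (by omega)]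
      ring
  rw [What, Finset.sum_congr rfl split, Finset.sum_add_distrib]
  have hdiag : ∑ p ∈ range (k+1), (if 2*p = k then w p (k-p) else 0)
      = if 2 ∣ k then w (k/2) (k/2) else 0 := by
    rw [sum_diag_ite k (fun p => w p (k-p))]
    by_cases h : 2 ∣ k
    · rw [if_pos h, if_pos h, show k - k/2 = k/2 by omega]
    · rw [if_neg h, if_neg h]
  rw [hdiag, add_comm]
  congr 1
  -- ∑_p (if k < 2p then w p (k-p) else 0) = ∑_m (if 2m+1 ≤ k then wd m * What(k-1-2m) else 0)
  have expand : ∀ p ∈ range (k+1), (if k < 2*p then w p (k-p) else 0) =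
      ∑ m ∈ range (k+1), (if k < 2*p then
        (if m ≤ k-p then w m m * w (p-m-1) (k-p-m) else 0) else 0) := by
    intro p hp
    rw [Finset.mem_range] at hp
    by_cases h : k < 2*p
    · simp only [if_pos h]
      rw [wG (p + (k-p)) p (k-p) le_rfl (by omega),
        ← sum_cut (k+1) (k-p) (by omega) (fun m => w m m * w (p-m-1) (k-p-m))]
    · simp only [if_neg h, Finset.sum_const_zero]
  rw [Finset.sum_congr rfl expand, Finset.sum_comm]
  apply Finset.sum_congr rfl
  intro m hm
  rw [Finset.mem_range] at hm
  by_cases hmk : 2*m+1 ≤ k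
  · rw [if_pos hmk]
    have hz : ∀ x, x < m+1 → (if k < 2*x then
        (if m ≤ k-x then w m m * w (x-m-1) (k-x-m) else 0) else 0) = 0 := by
      intro x hx
      by_cases h1 : k < 2*x
      · rw [if_pos h1, if_neg (by omega)]
      · rw [if_neg h1]
    rw [sum_shift (k+1) (m+1) (by omega) _ hz]
    have e : ∀ x ∈ range (k+1-(m+1)), (if k < 2*(m+1+x) then
        (if m ≤ k-(m+1+x) then w m m * w ((m+1+x)-m-1) (k-(m+1+x)-m) else 0) else 0)
        = (if x ≤ k-2*m-1 then w m m * w x (k-1-2*m-x) else 0) := by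
      intro x hx
      rw [Finset.mem_range] at hx
      by_cases h1 : k < 2*(m+1+x)
      · rw [if_pos h1]
        by_cases h2 : m ≤ k-(m+1+x)
        · rw [if_pos h2, if_pos (by omega), show (m+1+x)-m-1 = x by omega,
            show k-(m+1+x)-m = k-1-2*m-x by omega]
        · rw [if_neg h2, if_neg (by omega)]
      · rw [if_neg h1]
        by_cases h3 : x ≤ k-2*m-1
        · rw [if_pos h3, w_above x (k-1-2*m-x) (by omega), mul_zero]
        · rw [if_neg h3]
    rw [Finset.sum_congr rfl e, sum_cut (k+1-(m+1)) (k-2*m-1) (by omega),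
      ← Finset.mul_sum, What, show k-2*m-1+1 = (k-1-2*m)+1 by omega]
  · rw [if_neg hmk]
    apply Finset.sum_eq_zero
    intro p hp
    rw [Finset.mem_range] at hp
    by_cases h1 : k < 2*p
    · rw [if_pos h1, if_neg (by omega)]
    · rw [if_neg h1]

lemma vhat_rec (k : ℕ) : Vhat k =
    (∑ m ∈ range (k+1), (if 2*m+1 ≤ k then v m m * Vhat (k-1-2*m) else 0))
      + (if 2 ∣ k then v (k/2) (k/2) else 0) := by
  have split : ∀ p ∈ range (k+1), v p (k-p) =
      (if 2*p = k then v p (k-p) else 0) + (if 2*p < k then v p (k-p) else 0) := by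
    intro p hp
    rcases lt_trichotomy (2*p) k with h | h | h
    · rw [if_neg (by omega), if_pos (by omega)]
      ring
    · rw [if_pos (by omega), if_neg (by omega)]
      ring
    · rw [if_neg (by omega), if_neg (by omega), v_above p (k-p) (by omega)]
      ring
  rw [Vhat, Finset.sum_congr rfl split, Finset.sum_add_distrib]
  have hdiag : ∑ p ∈ range (k+1), (if 2*p = k then v p (k-p) else 0)
      = if 2 ∣ k then v (k/2) (k/2) else 0 := by
    rw [sum_diag_ite k (fun p => v p (k-p))]
    by_cases h : 2 ∣ k
    · rw [if_pos h, if_pos h, show k - k/2 = k/2 by omega]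
    · rw [if_neg h, if_neg h]
  rw [hdiag, add_comm]
  congr 1
  have expand : ∀ p ∈ range (k+1), (if 2*p < k then v p (k-p) else 0) =
      ∑ m ∈ range (k+1), (if 2*p < k then
        (if m ≤ p then v m m * v (p-m) (k-p-m-1) else 0) else 0) := by
    intro p hp
    rw [Finset.mem_range] at hp
    by_cases h : 2*p < k
    · simp only [if_pos h]
      rw [vG (p + (k-p)) p (k-p) le_rfl (by omega),
        ← sum_cut (k+1) p (by omega) (fun m => v m m * v (p-m) (k-p-m-1))]
    · simp only [if_neg h, Finset.sum_const_zero]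
  rw [Finset.sum_congr rfl expand, Finset.sum_comm]
  apply Finset.sum_congr rfl
  intro m hm
  rw [Finset.mem_range] at hm
  by_cases hmk : 2*m+1 ≤ k
  · rw [if_pos hmk]
    have hz : ∀ x, x < m → (if 2*x < k then
        (if m ≤ x then v m m * v (x-m) (k-x-m-1) else 0) else 0) = 0 := by
      intro x hx
      by_cases h1 : 2*x < k
      · rw [if_pos h1, if_neg (by omega)]
      · rw [if_neg h1]
    rw [sum_shift (k+1) m (by omega) _ hz]
    have e : ∀ x ∈ range (k+1-m), (if 2*(m+x) < k then
        (if m ≤ m+x then v m m * v ((m+x)-m) (k-(m+x)-m-1) else 0) else 0)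
        = (if x ≤ k-2*m-1 then v m m * v x (k-1-2*m-x) else 0) := by
      intro x hx
      rw [Finset.mem_range] at hx
      by_cases h1 : 2*(m+x) < k
      · rw [if_pos h1, if_pos (by omega), if_pos (by omega), show (m+x)-m = x by omega,
          show k-(m+x)-m-1 = k-1-2*m-x by omega]
      · rw [if_neg h1]
        by_cases h3 : x ≤ k-2*m-1
        · rw [if_pos h3, v_above x (k-1-2*m-x) (by omega), mul_zero]
        · rw [if_neg h3]
    rw [Finset.sum_congr rfl e, sum_cut (k+1-m) (k-2*m-1) (by omega),
      ← Finset.mul_sum, Vhat, show k-2*m-1+1 = (k-1-2*m)+1 by omega]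
  · rw [if_neg hmk]
    apply Finset.sum_eq_zero
    intro p hp
    rw [Finset.mem_range] at hp
    by_cases h1 : 2*p < k
    · rw [if_pos h1, if_neg (by omega)]
    · rw [if_neg h1]


lemma sum_even_ite (n : ℕ) (F : ℕ → ℤ) :
    ∑ k ∈ range (n+1), (if 2 ∣ k then F (k/2) else 0) = ∑ m ∈ range (n/2+1), F m := by
  induction n with
  | zero => simp
  | succ n ih =>
    rw [Finset.sum_range_succ, ih]
    by_cases h : 2 ∣ (n+1)
    · rw [if_pos h, show (n+1)/2 = n/2 + 1 by omega, Finset.sum_range_succ F (n/2+1)]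
    · rw [if_neg h, add_zero, show (n+1)/2 = n/2 by omega]

lemma coeff_subSq_mul (g T : PowerSeries ℤ) (n : ℕ) :
    PowerSeries.coeff n (subSq g * T) =
      ∑ m ∈ range (n/2+1), PowerSeries.coeff m g * PowerSeries.coeff (n-2*m) T := by
  rw [PowerSeries.coeff_mul, Finset.Nat.sum_antidiagonal_eq_sum_range_succ_mk]
  have e : ∀ k ∈ range (n+1), PowerSeries.coeff k (subSq g) * PowerSeries.coeff (n-k) T
      = if 2 ∣ k then (fun m => PowerSeries.coeff m g * PowerSeries.coeff (n-2*m) T) (k/2)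
        else 0 := by
    intro k hk
    rw [subSq, PowerSeries.coeff_mk]
    by_cases h : 2 ∣ k
    · rw [if_pos h, if_pos h]
      simp only
      rw [show n - 2*(k/2) = n - k by omega]
    · rw [if_neg h, if_neg h, zero_mul]
  rw [Finset.sum_congr rfl e,
    sum_even_ite n (fun m => PowerSeries.coeff m g * PowerSeries.coeff (n-2*m) T)]

lemma inv_eq {A B : PowerSeries ℤ} (h : A * B = 1) (hA : PowerSeries.constantCoeff A = 1) :
    A.invOfUnit 1 = B := by
  have hu : A * A.invOfUnit 1 = 1 := PowerSeries.mul_invOfUnit A 1 (by rw [hA]; rfl)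
  calc A.invOfUnit 1 = (A * B) * A.invOfUnit 1 := by rw [h, one_mul]
  _ = B * (A * A.invOfUnit 1) := by ring
  _ = B := by rw [hu, mul_one]

lemma what_series : (1 - PowerSeries.X * subSq catalanGF) * PowerSeries.mk What
    = subSq catalanGF := by
  ext k
  rw [sub_mul, one_mul, map_sub]
  rcases k with _ | k
  · simp only [PowerSeries.coeff_zero_eq_constantCoeff, map_mul]
    simp [What, subSq, catalanGF, w]
  · rw [show (PowerSeries.X : PowerSeries ℤ) * subSq catalanGF * PowerSeries.mk What
      = PowerSeries.X * (subSq catalanGF * PowerSeries.mk What) by ring,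
      PowerSeries.coeff_succ_X_mul, coeff_subSq_mul, PowerSeries.coeff_mk]
    have hrec := what_rec (k+1)
    have e : ∀ m ∈ range (k+1+1), (if 2*m+1 ≤ k+1 then w m m * What (k+1-1-2*m) else 0)
        = (if m ≤ k/2 then (catalan m : ℤ) * What (k-2*m) else 0) := by
      intro m hm
      by_cases h : 2*m+1 ≤ k+1
      · rw [if_pos h, if_pos (by omega), wd_catalan, show k+1-1-2*m = k-2*m by omega]
      · rw [if_neg h, if_neg (by omega)]
    rw [Finset.sum_congr rfl e, sum_cut (k+1+1) (k/2) (by omega), wd_catalan] at hrec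
    rw [hrec]
    have e2 : ∀ m ∈ range (k/2+1), PowerSeries.coeff m catalanGF * PowerSeries.coeff (k-2*m) (PowerSeries.mk What)
        = (catalan m : ℤ) * What (k-2*m) := by
      intro m hm
      rw [catalanGF, PowerSeries.coeff_mk, PowerSeries.coeff_mk]
    rw [Finset.sum_congr rfl e2, subSq, PowerSeries.coeff_mk]
    have e3 : PowerSeries.coeff ((k+1)/2) catalanGF = (catalan ((k+1)/2) : ℤ) := by
      rw [catalanGF, PowerSeries.coeff_mk]
    rw [e3]
    ring

lemma vhat_series : (1 - PowerSeries.X * subSq schroederGF) * PowerSeries.mk Vhat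
    = subSq schroederGF := by
  ext k
  rw [sub_mul, one_mul, map_sub]
  rcases k with _ | k
  · simp only [PowerSeries.coeff_zero_eq_constantCoeff, map_mul]
    simp [Vhat, subSq, schroederGF, v, schroeder]
  · rw [show (PowerSeries.X : PowerSeries ℤ) * subSq schroederGF * PowerSeries.mk Vhat
      = PowerSeries.X * (subSq schroederGF * PowerSeries.mk Vhat) by ring,
      PowerSeries.coeff_succ_X_mul, coeff_subSq_mul, PowerSeries.coeff_mk]
    have hrec := vhat_rec (k+1)
    have e : ∀ m ∈ range (k+1+1), (if 2*m+1 ≤ k+1 then v m m * Vhat (k+1-1-2*m) else 0)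
        = (if m ≤ k/2 then (schroeder m : ℤ) * Vhat (k-2*m) else 0) := by
      intro m hm
      by_cases h : 2*m+1 ≤ k+1
      · rw [if_pos h, if_pos (by omega), vd_schroeder, show k+1-1-2*m = k-2*m by omega]
      · rw [if_neg h, if_neg (by omega)]
    rw [Finset.sum_congr rfl e, sum_cut (k+1+1) (k/2) (by omega), vd_schroeder] at hrec
    rw [hrec]
    have e2 : ∀ m ∈ range (k/2+1), PowerSeries.coeff m schroederGF * PowerSeries.coeff (k-2*m) (PowerSeries.mk Vhat)
        = (schroeder m : ℤ) * Vhat (k-2*m) := by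
      intro m hm
      rw [schroederGF, PowerSeries.coeff_mk, PowerSeries.coeff_mk]
    rw [Finset.sum_congr rfl e2, subSq, PowerSeries.coeff_mk]
    have e3 : PowerSeries.coeff ((k+1)/2) schroederGF = (schroeder ((k+1)/2) : ℤ) := by
      rw [schroederGF, PowerSeries.coeff_mk]
    rw [e3]
    ring

def Bhat (k : ℕ) : ℤ := ∑ p ∈ range (k+1), bb p (k-p)
def Shat (k : ℕ) : ℤ := ∑ p ∈ range (k+1), st p (k-p)

lemma bb_zero_succ (q : ℕ) : bb 0 (q+1) = 0 := by simp [bb]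
lemma st_succ_zero (p : ℕ) : st (p+1) 0 = 0 := by simp [st]

lemma bhat_series : PowerSeries.mk Bhat = 1 + PowerSeries.X * PowerSeries.mk What := by
  ext k
  rcases k with _ | k
  · simp [Bhat, bb]
  · rw [map_add, PowerSeries.coeff_succ_X_mul, PowerSeries.coeff_mk, PowerSeries.coeff_mk,
      PowerSeries.coeff_one, if_neg (by omega)]
    rw [Bhat, Finset.sum_range_succ', Nat.sub_zero, bb_zero_succ, add_zero, What, zero_add]
    apply Finset.sum_congr rfl
    intro p hp
    rw [Finset.mem_range] at hp
    rw [show k+1-(p+1) = k-p by omega, bb_succ]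
lemma shat_series : PowerSeries.mk Shat = 1 + PowerSeries.X * PowerSeries.mk Vhat := by
  ext k
  rcases k with _ | k
  · simp [Shat, st]
  · rw [map_add, PowerSeries.coeff_succ_X_mul, PowerSeries.coeff_mk, PowerSeries.coeff_mk,
      PowerSeries.coeff_one, if_neg (by omega)]
    rw [Shat, Finset.sum_range_succ, Nat.sub_self, st_succ_zero, add_zero, Vhat, zero_add]
    apply Finset.sum_congr rfl
    intro p hp
    rw [Finset.mem_range] at hp
    rw [show k+1-p = (k-p)+1 by omega, st_succ]

lemma tri (φ : ℕ → ℕ → ℤ) : ∀ n, (∑ i ∈ range (n+1), ∑ m ∈ range (i+1), φ m (i-m))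
    = ∑ m ∈ range (n+1), ∑ p ∈ range (n+1-m), φ m p := by
  intro n
  induction n with
  | zero => simp
  | succ n ih =>
    rw [Finset.sum_range_succ, ih,
      Finset.sum_range_succ (fun m => ∑ p ∈ range (n+1+1-m), φ m p) (n+1),
      Finset.sum_range_succ (fun m => φ m (n+1-m)) (n+1)]
    have e : ∀ m ∈ range (n+1), (∑ p ∈ range (n+1+1-m), φ m p)
        = (∑ p ∈ range (n+1-m), φ m p) + φ m (n+1-m) := by
      intro m hm; rw [Finset.mem_range] at hm
      rw [show n+1+1-m = (n+1-m)+1 by omega, Finset.sum_range_succ]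
    rw [Finset.sum_congr rfl e, Finset.sum_add_distrib, show n+1-(n+1) = 0 by omega,
      show n+1+1-(n+1) = 1 by omega, Finset.sum_range_one]
    ring

def uu (p q : ℕ) : ℤ := st p q + bb p q - (if p = 0 ∧ q = 0 then 1 else 0)

lemma st_below (p q : ℕ) (h : q ≤ p) : st p q = if p = 0 ∧ q = 0 then 1 else 0 := by
  match p, q with
  | 0, 0 => simp [st]
  | p+1, 0 => simp [st]
  | p+1, q+1 => rw [st_succ, v_above (p+1) q (by omega), if_neg (by simp)]

lemma bb_above (p q : ℕ) (h : p ≤ q) : bb p q = if p = 0 ∧ q = 0 then 1 else 0 := by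
  match p, q with
  | 0, 0 => simp [bb]
  | 0, q+1 => simp [bb]
  | p+1, q => rw [bb_succ, w_above p q (by omega), if_neg (by simp)]

lemma uu_below (p q : ℕ) (h : q ≤ p) : uu p q = bb p q := by
  rw [uu, st_below p q h]; ring

lemma uu_above (p q : ℕ) (h : p ≤ q) : uu p q = st p q := by
  rw [uu, bb_above p q h]; ring

lemma master (i j : ℕ) : gN i j =
    ∑ m ∈ range (i+1), (if m ≤ j then gN m m * uu (i-m) (j-m) else 0) := by
  rcases le_total j i with h | h
  · rw [sum_cut (i+1) j (by omega) (fun m => gN m m * uu (i-m) (j-m)),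
      below_decomp (i+j) i j le_rfl h]
    apply Finset.sum_congr rfl
    intro m hm; rw [Finset.mem_range] at hm
    rw [uu_below _ _ (by omega)]
  · have e : ∀ m ∈ range (i+1), (if m ≤ j then gN m m * uu (i-m) (j-m) else 0)
        = gN m m * st (i-m) (j-m) := by
      intro m hm; rw [Finset.mem_range] at hm
      rw [if_pos (by omega), uu_above _ _ (by omega)]
    rw [Finset.sum_congr rfl e, above_decomp (i+j) i j le_rfl h]

def Uhat (k : ℕ) : ℤ := ∑ p ∈ range (k+1), uu p (k-p)

lemma uhat_eq (k : ℕ) : Uhat k = Shat k + Bhat k - (if k = 0 then 1 else 0) := by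
  rw [Uhat, Shat, Bhat]
  simp only [uu]
  rw [Finset.sum_sub_distrib, Finset.sum_add_distrib]
  congr 1
  rcases k with _ | k
  · simp
  · rw [if_neg (by omega)]
    apply Finset.sum_eq_zero
    intro p hp
    rw [Finset.mem_range] at hp
    rcases Nat.eq_zero_or_pos p with rfl | h
    · rw [if_neg (by omega)]
    · rw [if_neg (by omega)]

lemma total_eq (n : ℕ) : (∑ i ∈ range (n+1), gN i (n-i))
    = ∑ m ∈ range (n/2+1), gN m m * Uhat (n-2*m) := by
  have e1 : ∀ i ∈ range (n+1), gN i (n-i) = ∑ m ∈ range (i+1),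
      (if 2*m + (i-m) ≤ n then gN m m * uu (i-m) (n-2*m-(i-m)) else 0) := by
    intro i hi; rw [Finset.mem_range] at hi
    rw [master i (n-i)]
    apply Finset.sum_congr rfl
    intro m hm; rw [Finset.mem_range] at hm
    by_cases h : m ≤ n-i
    · rw [if_pos h, if_pos (by omega), show n-i-m = n-2*m-(i-m) by omega]
    · rw [if_neg h, if_neg (by omega)]
  rw [Finset.sum_congr rfl e1,
    tri (fun m p => if 2*m+p ≤ n then gN m m * uu p (n-2*m-p) else 0) n]
  have e2 : ∀ m ∈ range (n+1), (∑ p ∈ range (n+1-m),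
      (if 2*m+p ≤ n then gN m m * uu p (n-2*m-p) else 0))
      = (if m ≤ n/2 then gN m m * Uhat (n-2*m) else 0) := by
    intro m hm; rw [Finset.mem_range] at hm
    by_cases h : m ≤ n/2
    · rw [if_pos h]
      have e3 : ∀ p ∈ range (n+1-m), (if 2*m+p ≤ n then gN m m * uu p (n-2*m-p) else 0)
          = (if p ≤ n-2*m then gN m m * uu p (n-2*m-p) else 0) := by
        intro p hp
        by_cases h2 : 2*m+p ≤ n
        · rw [if_pos h2, if_pos (by omega)]
        · rw [if_neg h2, if_neg (by omega)]
      rw [Finset.sum_congr rfl e3, sum_cut (n+1-m) (n-2*m) (by omega),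
        ← Finset.mul_sum, Uhat]
    · rw [if_neg h]
      apply Finset.sum_eq_zero
      intro p hp
      rw [if_neg (by omega)]
  rw [Finset.sum_congr rfl e2, sum_cut (n+1) (n/2) (by omega) (fun m => gN m m * Uhat (n-2*m))]

lemma card_bridge (i j : ℕ) : ((Nat.card ↥(LCSstar i j)) : ℤ) = gN i j := by
  rw [Nat.card_coe_set_eq]
  rfl

lemma coeff_FstarGF (m : ℕ) : PowerSeries.coeff m FstarGF = gN m m := by
  rw [FstarGF, PowerSeries.coeff_mk, fCSstar]
  exact card_bridge m m

theorem main' (n : ℕ) :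
    (∑ i ∈ range (n+1), gN i (n-i)) =
      PowerSeries.coeff n (subSq FstarGF *
        ((1 - PowerSeries.X * subSq schroederGF).invOfUnit 1 +
         (1 - PowerSeries.X * subSq catalanGF).invOfUnit 1 - 1)) := by
  have hS : (1 - PowerSeries.X * subSq schroederGF).invOfUnit 1 = PowerSeries.mk Shat := by
    apply inv_eq
    · rw [shat_series]
      calc (1 - PowerSeries.X * subSq schroederGF) * (1 + PowerSeries.X * PowerSeries.mk Vhat)
          = (1 - PowerSeries.X * subSq schroederGF)
            + PowerSeries.X * ((1 - PowerSeries.X * subSq schroederGF) * PowerSeries.mk Vhat) := by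
            ring
      _ = 1 := by rw [vhat_series]; ring
    · simp
  have hC : (1 - PowerSeries.X * subSq catalanGF).invOfUnit 1 = PowerSeries.mk Bhat := by
    apply inv_eq
    · rw [bhat_series]
      calc (1 - PowerSeries.X * subSq catalanGF) * (1 + PowerSeries.X * PowerSeries.mk What)
          = (1 - PowerSeries.X * subSq catalanGF)
            + PowerSeries.X * ((1 - PowerSeries.X * subSq catalanGF) * PowerSeries.mk What) := by
            ring
      _ = 1 := by rw [what_series]; ring
    · simp
  have hmk : PowerSeries.mk Shat + PowerSeries.mk Bhat - 1 = PowerSeries.mk Uhat := by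
    ext k
    rw [map_sub, map_add, PowerSeries.coeff_mk, PowerSeries.coeff_mk, PowerSeries.coeff_mk,
      PowerSeries.coeff_one, uhat_eq]
  rw [hS, hC, hmk, coeff_subSq_mul, total_eq]
  apply Finset.sum_congr rfl
  intro m hm
  rw [coeff_FstarGF, PowerSeries.coeff_mk]

end

/-- the total number of paths from (0,0) to the points (i, n−i),
i = 0,…,n, in L*_CS equals
[x^n] F*(x²)·(1/(1 − x·S(x²)) + 1/(1 − x·C(x²)) − 1). -/
theorem LCSstar_antidiagonal_total (n : ℕ) :
    ((∑ i ∈ Finset.range (n + 1), Nat.card ↥(LCSstar i (n - i))) : ℤ) =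
      PowerSeries.coeff n
        (subSq FstarGF *
          ((1 - PowerSeries.X * subSq schroederGF).invOfUnit 1 +
           (1 - PowerSeries.X * subSq catalanGF).invOfUnit 1 - 1)) := by
  have hL : ((∑ i ∈ Finset.range (n + 1), Nat.card ↥(LCSstar i (n - i))) : ℤ)
      = ∑ i ∈ Finset.range (n+1), gN i (n-i) := by
    apply Finset.sum_congr rfl
    intro i hi
    exact card_bridge i (n-i)
  rw [hL]
  exact main' n
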